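/- Let X be a finite ground set, let 𝒯 be a finite family of subsets of X, and let G be the incidence bipartite graph of (X, 𝒯) with thresholds τ(x) = 1 for x ∈ X and τ(T) = |T| for T ∈ 𝒯. If 𝒮 ⊆ 𝒯 is a set cover of (X, 𝒯), i.e., ⋃_{T ∈ 𝒮} T = X, then 𝒮 (viewed as a subset of the vertices of G) is a target set of G. -/

import Mathlib

open scoped Classical

/-- The neighborhood of `u` in `G`, as a finset. -/
noncomputable def nbrs {V : Type*} [Fintype V] (G : SimpleGraph V) (u : V) : Finset V :=
  Finset.univ.filter (fun w => G.Adj u w)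

/-- The diffusion process: `diffusion G τ S i` is the set `A[S,i]` of vertices
active after `i` rounds starting from seed set `S`. -/
noncomputable def diffusion {V : Type*} [Fintype V] (G : SimpleGraph V) (τ : V → ℕ)
    (S : Finset V) : ℕ → Finset V
  | 0 => S
  | (i + 1) => diffusion G τ S i ∪
      Finset.univ.filter (fun u => τ u ≤ (nbrs G u ∩ diffusion G τ S i).card)

/-- The influence of a seed set `S`: all vertices eventually activated. -/
def influence {V : Type*} [Fintype V] (G : SimpleGraph V) (τ : V → ℕ) (S : Finset V) : Set V :=
  {v | ∃ i, v ∈ diffusion G τ S i}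

/-- `S` is a target set if its influence is the whole vertex set. -/
def isTargetSet {V : Type*} [Fintype V] (G : SimpleGraph V) (τ : V → ℕ) (S : Finset V) : Prop :=
  influence G τ S = Set.univ

/-- `C` is a vertex cover of `G`. -/
def isVertexCover {V : Type*} [Fintype V] (G : SimpleGraph V) (C : Finset V) : Prop :=
  ∀ u v, G.Adj u v → u ∈ C ∨ v ∈ C

/-- The incidence bipartite graph of a set system `(X, 𝒯)`: its vertices are the
elements of the ground type together with the members of `𝒯`, and `x` is adjacent
to `T` iff `x ∈ T`. -/
def incGraph {α : Type*} (𝒯 : Finset (Finset α)) :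
    SimpleGraph (α ⊕ {T : Finset α // T ∈ 𝒯}) where
  Adj u w :=
    (∃ (x : α) (T : {T : Finset α // T ∈ 𝒯}), u = Sum.inl x ∧ w = Sum.inr T ∧ x ∈ T.1) ∨
    (∃ (x : α) (T : {T : Finset α // T ∈ 𝒯}), w = Sum.inl x ∧ u = Sum.inr T ∧ x ∈ T.1)
  symm := by
    constructor
    rintro u w (⟨x, T, h1, h2, h3⟩ | ⟨x, T, h1, h2, h3⟩)
    · exact Or.inr ⟨x, T, h1, h2, h3⟩
    · exact Or.inl ⟨x, T, h1, h2, h3⟩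
  loopless := by
    constructor
    rintro u (⟨x, T, h1, h2, -⟩ | ⟨x, T, h1, h2, -⟩) <;> rw [h1] at h2 <;> exact Sum.inl_ne_inr h2

/-- The threshold function of the incidence graph: `1` on ground elements and
`|T|` on set vertices. -/
def incThreshold {α : Type*} (𝒯 : Finset (Finset α)) : α ⊕ {T : Finset α // T ∈ 𝒯} → ℕ :=
  Sum.elim (fun _ => 1) (fun T => T.1.card)

lemma diffusion_succ {V : Type*} [Fintype V] (G : SimpleGraph V) (τ : V → ℕ)
    (S : Finset V) (i : ℕ) :
    diffusion G τ S (i + 1) = diffusion G τ S i ∪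
      Finset.univ.filter (fun u => τ u ≤ (nbrs G u ∩ diffusion G τ S i).card) := rfl

/-- Every set cover of `(X, 𝒯)`, viewed as a set of vertices of the incidence
graph, is a target set. -/
theorem setCover_isTargetSet {α : Type*} [Fintype α] (𝒯 : Finset (Finset α))
    (𝒮 : Finset (Finset α)) (h𝒮 : 𝒮 ⊆ 𝒯)
    (hcover : ∀ x : α, ∃ T ∈ 𝒮, x ∈ T) :
    isTargetSet (incGraph 𝒯) (incThreshold 𝒯)
      (Finset.univ.filter
        (fun v : α ⊕ {T : Finset α // T ∈ 𝒯} =>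
          ∃ T : {T : Finset α // T ∈ 𝒯}, v = Sum.inr T ∧ T.1 ∈ 𝒮)) := by
  set S : Finset (α ⊕ {T : Finset α // T ∈ 𝒯}) :=
    Finset.univ.filter
      (fun v : α ⊕ {T : Finset α // T ∈ 𝒯} =>
        ∃ T : {T : Finset α // T ∈ 𝒯}, v = Sum.inr T ∧ T.1 ∈ 𝒮) with hS
  set G := incGraph 𝒯 with hG
  set τ := incThreshold 𝒯 with hτ
  letI : DecidableEq (α ⊕ {T : Finset α // T ∈ 𝒯}) := fun a b => Classical.propDecidable (a = b)
  have h1 : ∀ x : α, Sum.inl x ∈ diffusion G τ S 1 := by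
    intro x
    obtain ⟨T, hTS, hxT⟩ := hcover x
    have hT𝒯 : T ∈ 𝒯 := h𝒮 hTS
    rw [diffusion_succ]
    refine Finset.mem_union.mpr (Or.inr ?_)
    rw [Finset.mem_filter]
    refine ⟨Finset.mem_univ _, ?_⟩
    refine Finset.card_pos.mpr ⟨Sum.inr ⟨T, hT𝒯⟩, ?_⟩
    rw [Finset.mem_inter]
    constructor
    · rw [nbrs, Finset.mem_filter]
      exact ⟨Finset.mem_univ _, Or.inl ⟨x, ⟨T, hT𝒯⟩, rfl, rfl, hxT⟩⟩
    · show _ ∈ S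
      simp only [hS, Finset.mem_filter]
      exact ⟨Finset.mem_univ _, ⟨T, hT𝒯⟩, rfl, hTS⟩
  have h2 : ∀ T : {T : Finset α // T ∈ 𝒯}, Sum.inr T ∈ diffusion G τ S 2 := by
    intro T
    rw [diffusion_succ]
    refine Finset.mem_union.mpr (Or.inr ?_)
    rw [Finset.mem_filter]
    refine ⟨Finset.mem_univ _, ?_⟩
    refine Finset.card_le_card_of_injOn
      (fun x => (Sum.inl x : α ⊕ {T : Finset α // T ∈ 𝒯})) ?_
      (fun a _ b _ h => Sum.inl.inj h)
    intro x hx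
    rw [Finset.mem_coe, Finset.mem_inter]
    refine ⟨?_, h1 x⟩
    rw [nbrs, Finset.mem_filter]
    exact ⟨Finset.mem_univ _, Or.inr ⟨x, T, rfl, rfl, hx⟩⟩
  apply Set.eq_univ_of_forall
  intro v
  refine ⟨2, ?_⟩
  cases v with
  | inl x =>
    rw [diffusion_succ]
    exact Finset.mem_union.mpr (Or.inl (h1 x))
  | inr T => exact h2 T
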